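/- For every tree T of order at least 3, γ_t(T) ≤ (4/3)·γ_sp(T), i.e., 3·γ_t(T) ≤ 4·γ_sp(T). -/

import Mathlib

open SimpleGraph

/-- `S` is a super dominating set of `G`: every vertex `u ∉ S` has some `v ∈ S`
with `N(v) ∩ Sᶜ = {u}`. -/
def SuperDomSet {V : Type} (G : SimpleGraph V) (S : Set V) : Prop :=
  ∀ u ∈ Sᶜ, ∃ v ∈ S, G.neighborSet v ∩ Sᶜ = {u}

/-- The super domination number `γ_sp(G)`. -/
noncomputable def superDomNum {V : Type} (G : SimpleGraph V) : ℕ :=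
  sInf {n | ∃ S : Set V, SuperDomSet G S ∧ S.ncard = n}

/-- `S` is a dominating set of `G`. -/
def DomSet {V : Type} (G : SimpleGraph V) (S : Set V) : Prop :=
  ∀ u ∉ S, ∃ v ∈ S, G.Adj v u

/-- The domination number `γ(G)`. -/
noncomputable def domNum {V : Type} (G : SimpleGraph V) : ℕ :=
  sInf {n | ∃ S : Set V, DomSet G S ∧ S.ncard = n}

/-- `S` is a total dominating set of `G`: every vertex has a neighbor in `S`. -/
def TotalDomSet {V : Type} (G : SimpleGraph V) (S : Set V) : Prop :=
  ∀ u : V, ∃ v ∈ S, G.Adj v u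

/-- The total domination number `γ_t(G)`. -/
noncomputable def totalDomNum {V : Type} (G : SimpleGraph V) : ℕ :=
  sInf {n | ∃ S : Set V, TotalDomSet G S ∧ S.ncard = n}

/-- A leaf is a vertex of degree 1. -/
def IsLeaf {V : Type} (G : SimpleGraph V) (v : V) : Prop :=
  (G.neighborSet v).ncard = 1

/-- A support vertex is a vertex adjacent to a leaf. -/
def IsSupport {V : Type} (G : SimpleGraph V) (v : V) : Prop :=
  ∃ u, G.Adj v u ∧ IsLeaf G u

namespace TreeAuxNS

variable {V : Type} [DecidableEq V] {T : SimpleGraph V}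

lemma path_unique (hT : T.IsTree) {x y : V} {p q : T.Walk x y}
    (hp : p.IsPath) (hq : q.IsPath) : p = q :=
  ((hT.existsUnique_path x y).unique hp hq)

lemma length_eq_dist (hT : T.IsTree) {x y : V} (p : T.Walk x y) (hp : p.IsPath) :
    p.length = T.dist x y := by
  obtain ⟨q, hq⟩ := hT.isConnected.exists_walk_length_eq_dist x y
  have h1 : q.bypass.length ≤ q.length := SimpleGraph.Walk.length_bypass_le q
  have h2 : p = q.bypass := path_unique hT hp (SimpleGraph.Walk.bypass_isPath q)
  have h3 := SimpleGraph.dist_le p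
  have h4 : p.length = q.bypass.length := by rw [h2]
  omega

lemma dist_add_dist_of_mem_support (hT : T.IsTree) {x y z : V} (p : T.Walk x y)
    (hp : p.IsPath) (hz : z ∈ p.support) :
    T.dist x z + T.dist z y = p.length := by
  have h1 : (p.takeUntil z hz).length = T.dist x z :=
    length_eq_dist hT _ (hp.takeUntil hz)
  have h2 : (p.dropUntil z hz).length = T.dist z y :=
    length_eq_dist hT _ (hp.dropUntil hz)
  have h3 := congrArg SimpleGraph.Walk.length (p.take_spec hz)
  rw [SimpleGraph.Walk.length_append] at h3
  omega

lemma isPath_concat {x y z : V} {p : T.Walk x y} (hp : p.IsPath) (h : T.Adj y z)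
    (hz : z ∉ p.support) : (p.concat h).IsPath := by
  rw [SimpleGraph.Walk.isPath_def, SimpleGraph.Walk.support_concat,
    List.nodup_append']
  refine ⟨hp.support_nodup, List.nodup_singleton z, ?_⟩
  intro a ha hb
  rw [List.mem_singleton] at hb
  exact hz (hb ▸ ha)

lemma exists_parent (hT : T.IsTree) {r x : V} (hx : x ≠ r) :
    ∃ u, T.Adj u x ∧ T.dist r u + 1 = T.dist r x := by
  obtain ⟨p, hp⟩ := hT.isConnected.exists_walk_length_eq_dist r x
  obtain ⟨u, ha, q, hq⟩ := SimpleGraph.Walk.exists_eq_cons_of_ne hx p.reverse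
  refine ⟨u, ha.symm, ?_⟩
  have h1 : T.dist u r ≤ q.length := SimpleGraph.dist_le q
  have hcomm : T.dist u r = T.dist r u := SimpleGraph.dist_comm
  have hlen : q.length + 1 = T.dist r x := by
    have := congrArg SimpleGraph.Walk.length hq
    rw [SimpleGraph.Walk.length_reverse, SimpleGraph.Walk.length_cons] at this
    omega
  have hux : T.dist u x = 1 := SimpleGraph.dist_eq_one_iff_adj.mpr ha.symm
  have h2 : T.dist r x ≤ T.dist r u + T.dist u x := hT.isConnected.dist_triangle
  omega

lemma parent_unique (hT : T.IsTree) {r x u u' : V} (hu : T.Adj u x) (hu' : T.Adj u' x)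
    (hd : T.dist r u + 1 = T.dist r x) (hd' : T.dist r u' + 1 = T.dist r x) : u = u' := by
  obtain ⟨P, hP⟩ := hT.isConnected.exists_walk_length_eq_dist r u
  obtain ⟨P', hP'⟩ := hT.isConnected.exists_walk_length_eq_dist r u'
  have hPp := P.isPath_of_length_eq_dist hP
  have hP'p := P'.isPath_of_length_eq_dist hP'
  have hxu : T.dist x u = 1 := SimpleGraph.dist_eq_one_iff_adj.mpr hu.symm
  have hxu' : T.dist x u' = 1 := SimpleGraph.dist_eq_one_iff_adj.mpr hu'.symm
  have hx : x ∉ P.support := by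
    intro hmem
    have := dist_add_dist_of_mem_support hT P hPp hmem
    omega
  have hx' : x ∉ P'.support := by
    intro hmem
    have := dist_add_dist_of_mem_support hT P' hP'p hmem
    omega
  have h1 : (P.concat hu).IsPath := isPath_concat hPp hu hx
  have h2 : (P'.concat hu').IsPath := isPath_concat hP'p hu' hx'
  have heq : P.concat hu = P'.concat hu' := path_unique hT h1 h2
  obtain ⟨hv, -⟩ := SimpleGraph.Walk.concat_inj heq
  exact hv

lemma adj_dist_succ (hT : T.IsTree) (r : V) {u x : V} (h : T.Adj u x) :
    T.dist r x = T.dist r u + 1 ∨ T.dist r u = T.dist r x + 1 := by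
  have hux : T.dist u x = 1 := SimpleGraph.dist_eq_one_iff_adj.mpr h
  have hxu : T.dist x u = 1 := SimpleGraph.dist_eq_one_iff_adj.mpr h.symm
  have t1 : T.dist r x ≤ T.dist r u + T.dist u x := hT.isConnected.dist_triangle
  have t2 : T.dist r u ≤ T.dist r x + T.dist x u := hT.isConnected.dist_triangle
  have hne : T.dist r u ≠ T.dist r x := by
    intro heq
    by_cases hk : T.dist r x = 0
    · have hx0 : r = x := hT.isConnected.dist_eq_zero_iff.mp hk
      have hu0 : r = u := hT.isConnected.dist_eq_zero_iff.mp (by omega)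
      exact h.ne (hu0 ▸ hx0 ▸ rfl)
    · obtain ⟨P, hP⟩ := hT.isConnected.exists_walk_length_eq_dist r x
      have hPp := P.isPath_of_length_eq_dist hP
      by_cases hmem : u ∈ P.support
      · have := dist_add_dist_of_mem_support hT P hPp hmem
        omega
      · have hQ : (P.concat h.symm).IsPath := isPath_concat hPp h.symm hmem
        have := length_eq_dist hT _ hQ
        rw [SimpleGraph.Walk.length_concat] at this
        omega
  omega

lemma btw_ordered (hT : T.IsTree) {r x z p : V}
    (hz : T.dist r z + T.dist z x = T.dist r x)
    (hp : T.dist r p + T.dist p x = T.dist r x)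
    (hle : T.dist r z ≤ T.dist r p) :
    T.dist r z + T.dist z p = T.dist r p := by
  obtain ⟨P1, hP1⟩ := hT.isConnected.exists_walk_length_eq_dist r z
  obtain ⟨P2, hP2⟩ := hT.isConnected.exists_walk_length_eq_dist z x
  obtain ⟨Q1, hQ1⟩ := hT.isConnected.exists_walk_length_eq_dist r p
  obtain ⟨Q2, hQ2⟩ := hT.isConnected.exists_walk_length_eq_dist p x
  have hPlen : (P1.append P2).length = T.dist r x := by
    rw [SimpleGraph.Walk.length_append]; omega
  have hQlen : (Q1.append Q2).length = T.dist r x := by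
    rw [SimpleGraph.Walk.length_append]; omega
  have hPpath := (P1.append P2).isPath_of_length_eq_dist hPlen
  have hQpath := (Q1.append Q2).isPath_of_length_eq_dist hQlen
  have hPQ : P1.append P2 = Q1.append Q2 := path_unique hT hPpath hQpath
  have hpmem : p ∈ (P1.append P2).support := by
    rw [hPQ, SimpleGraph.Walk.mem_support_append_iff]
    exact Or.inl Q1.end_mem_support
  rw [SimpleGraph.Walk.mem_support_append_iff] at hpmem
  rcases hpmem with hmem | hmem
  · have h1 := dist_add_dist_of_mem_support hT P1 hPpath.of_append_left hmem
    have h2 : T.dist z p = T.dist p z := SimpleGraph.dist_comm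
    omega
  · have h1 := dist_add_dist_of_mem_support hT P2 hPpath.of_append_right hmem
    omega


set_option maxHeartbeats 1000000 in
lemma aux (hT : T.IsTree) :
    ∀ (n : ℕ) (A : Finset V) (r : V), A.card ≤ n → r ∈ A → 2 ≤ A.card →
    (∀ x ∈ A, ∀ z : V, T.dist r z + T.dist z x = T.dist r x → z ∈ A) →
    ∃ S : Finset V, S ⊆ A ∧ r ∈ S ∧ (∀ u ∈ A, ∃ v ∈ S, T.Adj v u) ∧
      3 * S.card ≤ 2 * A.card + 2 := by
  intro n
  induction n with
  | zero => intro A r h1 _ h3 _; omega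
  | succ n ih =>
    intro A r hAn hrA hA2 hconn
    classical
    obtain ⟨v0, hv0A, hv0max⟩ := A.exists_max_image (fun x => T.dist r x) ⟨r, hrA⟩
    by_cases hD1 : T.dist r v0 ≤ 1
    · -- star case
      obtain ⟨x, hxA, hxr⟩ : ∃ x ∈ A, x ≠ r := by
        obtain ⟨x, hx, y, hy, hxy⟩ := Finset.one_lt_card.mp hA2
        by_cases hx' : x = r
        · exact ⟨y, hy, by rw [← hx']; exact fun h => hxy h.symm⟩
        · exact ⟨x, hx, hx'⟩
      have hpos : 0 < T.dist r x := hT.isConnected.pos_dist_of_ne (Ne.symm hxr)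
      have hdx : T.dist r x = 1 := by have := hv0max x hxA; omega
      have hadj : T.Adj r x := SimpleGraph.dist_eq_one_iff_adj.mp hdx
      refine ⟨{r, x}, ?_, Finset.mem_insert_self _ _, ?_, ?_⟩
      · intro a ha
        rcases Finset.mem_insert.mp ha with rfl | ha
        · exact hrA
        · rw [Finset.mem_singleton] at ha; exact ha ▸ hxA
      · intro u huA
        by_cases hur : u = r
        · exact ⟨x, Finset.mem_insert_of_mem (Finset.mem_singleton_self x),
            hur ▸ hadj.symm⟩
        · have hpu : 0 < T.dist r u := hT.isConnected.pos_dist_of_ne (Ne.symm hur)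
          have hdu : T.dist r u = 1 := by have := hv0max u huA; omega
          exact ⟨r, Finset.mem_insert_self _ _, SimpleGraph.dist_eq_one_iff_adj.mp hdu⟩
      · have hc2 : ({r, x} : Finset V).card ≤ 2 :=
          (Finset.card_insert_le _ _).trans (by simp)
        omega
    · -- deep case
      push_neg at hD1
      have hD2 : 2 ≤ T.dist r v0 := hD1
      have hv0r : v0 ≠ r := by
        intro h; rw [h, SimpleGraph.dist_self] at hD2; omega
      obtain ⟨v1, hadj1, hd1⟩ := exists_parent hT hv0r
      have hv1r : v1 ≠ r := by
        intro h; rw [h, SimpleGraph.dist_self] at hd1; omega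
      obtain ⟨v2, hadj2, hd2⟩ := exists_parent hT hv1r
      have e10 : T.dist v1 v0 = 1 := SimpleGraph.dist_eq_one_iff_adj.mpr hadj1
      have e21 : T.dist v2 v1 = 1 := SimpleGraph.dist_eq_one_iff_adj.mpr hadj2
      have hv1A : v1 ∈ A := hconn v0 hv0A v1 (by omega)
      have hv2A : v2 ∈ A := hconn v1 hv1A v2 (by omega)
      have hd20 : T.dist v2 v0 = 2 := by
        have t1 : T.dist v2 v0 ≤ T.dist v2 v1 + T.dist v1 v0 := hT.isConnected.dist_triangle
        have t2 : T.dist r v0 ≤ T.dist r v2 + T.dist v2 v0 := hT.isConnected.dist_triangle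
        omega
      set B := A.filter (fun x => T.dist r x = T.dist r v2 + T.dist v2 x) with hBdef
      set W := B.filter (fun x => T.dist v2 x = 1) with hWdef
      set GC := B.filter (fun x => T.dist v2 x = 2) with hGCdef
      set W' := W.filter (fun w => ∃ x ∈ GC, T.Adj w x) with hW'def
      have hBA : B ⊆ A := Finset.filter_subset _ _
      have hWB : W ⊆ B := Finset.filter_subset _ _
      have hGCB : GC ⊆ B := Finset.filter_subset _ _
      have hW'W : W' ⊆ W := Finset.filter_subset _ _
      have hv2B : v2 ∈ B := Finset.mem_filter.mpr ⟨hv2A, by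
        rw [SimpleGraph.dist_self]; omega⟩
      have hv1W : v1 ∈ W := Finset.mem_filter.mpr
        ⟨Finset.mem_filter.mpr ⟨hv1A, by omega⟩, e21⟩
      have hv0GC : v0 ∈ GC := Finset.mem_filter.mpr
        ⟨Finset.mem_filter.mpr ⟨hv0A, by omega⟩, hd20⟩
      have hv1W' : v1 ∈ W' := Finset.mem_filter.mpr ⟨hv1W, v0, hv0GC, hadj1⟩
      have htri : ∀ x ∈ B, x = v2 ∨ x ∈ W ∨ x ∈ GC := by
        intro x hx
        have h1 := (Finset.mem_filter.mp hx).2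
        have h2 := hv0max x (hBA hx)
        have h3 : T.dist v2 x = 0 ∨ T.dist v2 x = 1 ∨ T.dist v2 x = 2 := by omega
        rcases h3 with h3 | h3 | h3
        · exact Or.inl (hT.isConnected.dist_eq_zero_iff.mp h3).symm
        · exact Or.inr (Or.inl (Finset.mem_filter.mpr ⟨hx, h3⟩))
        · exact Or.inr (Or.inr (Finset.mem_filter.mpr ⟨hx, h3⟩))
      have hGCparent : ∀ x ∈ GC, ∃ w ∈ W', T.Adj w x := by
        intro x hx
        have hxB := (Finset.mem_filter.mp hx).1
        have hx2 : T.dist v2 x = 2 := (Finset.mem_filter.mp hx).2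
        have hxBeq : T.dist r x = T.dist r v2 + T.dist v2 x := (Finset.mem_filter.mp hxB).2
        have hxA : x ∈ A := hBA hxB
        have hxr : x ≠ r := by
          intro h; subst h; rw [SimpleGraph.dist_self] at hxBeq; omega
        obtain ⟨p, hpx, hdp⟩ := exists_parent hT hxr
        have hpx1 : T.dist p x = 1 := SimpleGraph.dist_eq_one_iff_adj.mpr hpx
        have hpA : p ∈ A := hconn x hxA p (by omega)
        have hble := btw_ordered hT (z := v2) (p := p) (x := x) hxBeq.symm
          (by omega) (by omega)
        have hpB : p ∈ B := Finset.mem_filter.mpr ⟨hpA, by omega⟩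
        have hpW : p ∈ W := Finset.mem_filter.mpr ⟨hpB, by omega⟩
        exact ⟨p, Finset.mem_filter.mpr ⟨hpW, x, hx, hpx⟩, hpx⟩
      have hW'GC : W'.card ≤ GC.card := by
        classical
        by_contra hlt
        push_neg at hlt
        obtain ⟨w, hw, w', hw', hne, hfeq⟩ :=
          Finset.exists_ne_map_eq_of_card_lt_of_maps_to hlt
            (f := fun w => if h : ∃ x ∈ GC, T.Adj w x then h.choose else w)
            (fun w hw => by
              have h := (Finset.mem_filter.mp hw).2
              simp only [dif_pos h]
              exact h.choose_spec.1)
        have h1 := (Finset.mem_filter.mp hw).2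
        have h2 := (Finset.mem_filter.mp hw').2
        rw [dif_pos h1, dif_pos h2] at hfeq
        set gc := h1.choose with hgc
        have hgc1 : gc ∈ GC := h1.choose_spec.1
        have hgc2 : T.Adj w gc := h1.choose_spec.2
        have hgc2' : T.Adj w' gc := hfeq ▸ h2.choose_spec.2
        have hwW := hW'W hw
        have hw'W := hW'W hw'
        have hdw : T.dist r w = T.dist r v2 + 1 := by
          have := (Finset.mem_filter.mp (hWB hwW)).2
          have := (Finset.mem_filter.mp hwW).2
          omega
        have hdw' : T.dist r w' = T.dist r v2 + 1 := by
          have := (Finset.mem_filter.mp (hWB hw'W)).2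
          have := (Finset.mem_filter.mp hw'W).2
          omega
        have hdgc : T.dist r gc = T.dist r v2 + 2 := by
          have := (Finset.mem_filter.mp (hGCB hgc1)).2
          have := (Finset.mem_filter.mp hgc1).2
          omega
        exact hne (parent_unique hT (r := r) hgc2 hgc2' (by omega) (by omega))
      have hW'Wcard : W'.card ≤ W.card := Finset.card_le_card hW'W
      have hdisjWGC : Disjoint W GC := by
        rw [Finset.disjoint_left]
        intro a haW haGC
        have h1 := (Finset.mem_filter.mp haW).2
        have h2 := (Finset.mem_filter.mp haGC).2
        omega
      have hv2nWGC : v2 ∉ W ∪ GC := by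
        rw [Finset.mem_union]
        rintro (h | h) <;>
          · have := (Finset.mem_filter.mp h).2
            rw [SimpleGraph.dist_self] at this
            omega
      have hBlow : 1 + W.card + GC.card ≤ B.card := by
        have hsub : insert v2 (W ∪ GC) ⊆ B := by
          intro a ha
          rcases Finset.mem_insert.mp ha with rfl | ha'
          · exact hv2B
          · rcases Finset.mem_union.mp ha' with h | h
            · exact hWB h
            · exact hGCB h
        have e1 : (insert v2 (W ∪ GC)).card = (W ∪ GC).card + 1 :=
          Finset.card_insert_of_notMem hv2nWGC
        have e2 : (W ∪ GC).card = W.card + GC.card := Finset.card_union_of_disjoint hdisjWGC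
        have e3 := Finset.card_le_card hsub
        omega
      have hW'pos : 1 ≤ W'.card := Finset.one_le_card.mpr ⟨v1, hv1W'⟩
      by_cases hv2r : v2 = r
      · -- v2 = r : B = A
        have hAB : ∀ x ∈ A, x ∈ B := by
          intro x hx
          refine Finset.mem_filter.mpr ⟨hx, ?_⟩
          rw [hv2r, SimpleGraph.dist_self]; omega
        refine ⟨insert v2 W', ?_, hv2r ▸ Finset.mem_insert_self _ _, ?_, ?_⟩
        · intro a ha
          rcases Finset.mem_insert.mp ha with rfl | ha'
          · exact hv2A
          · exact hBA (hWB (hW'W ha'))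
        · intro u huA
          rcases htri u (hAB u huA) with rfl | hu | hu
          · exact ⟨v1, Finset.mem_insert_of_mem hv1W', hadj2.symm⟩
          · exact ⟨v2, Finset.mem_insert_self _ _,
              SimpleGraph.dist_eq_one_iff_adj.mp (Finset.mem_filter.mp hu).2⟩
          · obtain ⟨w, hwW', hadjw⟩ := hGCparent u hu
            exact ⟨w, Finset.mem_insert_of_mem hwW', hadjw⟩
        · have hc : (insert v2 W').card ≤ W'.card + 1 := Finset.card_insert_le _ _
          have hAcard : 1 + W.card + GC.card ≤ A.card :=
            le_trans hBlow (Finset.card_le_card hBA)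
          omega
      · -- v2 ≠ r
        have hv2rd : 1 ≤ T.dist r v2 := by
          have := hT.isConnected.pos_dist_of_ne (Ne.symm hv2r)
          omega
        set A' := A \ B with hA'def
        have hrA' : r ∈ A' := by
          rw [Finset.mem_sdiff]
          refine ⟨hrA, fun hrB => ?_⟩
          have := (Finset.mem_filter.mp hrB).2
          rw [SimpleGraph.dist_self] at this
          omega
        have hcardsum : A'.card + B.card = A.card := Finset.card_sdiff_add_card_eq_card hBA
        have hBpos : 1 ≤ B.card := Finset.one_le_card.mpr ⟨v2, hv2B⟩
        by_cases hA'1 : A'.card = 1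
        · -- A' = {r}
          have hA'eq : A' = {r} := by
            obtain ⟨a, ha⟩ := Finset.card_eq_one.mp hA'1
            rw [ha] at hrA' ⊢
            rw [Finset.mem_singleton] at hrA'
            rw [hrA']
          obtain ⟨p, hadj3, hd3⟩ := exists_parent hT hv2r
          have ep2 : T.dist p v2 = 1 := SimpleGraph.dist_eq_one_iff_adj.mpr hadj3
          have hp0 : T.dist p v0 = 3 := by
            have t1 : T.dist p v0 ≤ T.dist p v2 + T.dist v2 v0 := hT.isConnected.dist_triangle
            have t2 : T.dist r v0 ≤ T.dist r p + T.dist p v0 := hT.isConnected.dist_triangle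
            omega
          have hpA : p ∈ A := hconn v0 hv0A p (by omega)
          have hpB : p ∉ B := by
            intro h
            have := (Finset.mem_filter.mp h).2
            omega
          have hpr : p = r := by
            have : p ∈ A' := Finset.mem_sdiff.mpr ⟨hpA, hpB⟩
            rwa [hA'eq, Finset.mem_singleton] at this
          refine ⟨insert r (insert v2 W'), ?_, Finset.mem_insert_self _ _, ?_, ?_⟩
          · intro a ha
            rcases Finset.mem_insert.mp ha with rfl | ha'
            · exact hrA
            · rcases Finset.mem_insert.mp ha' with rfl | ha''
              · exact hv2A
              · exact hBA (hWB (hW'W ha''))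
          · intro u huA
            by_cases huB : u ∈ B
            · rcases htri u huB with rfl | hu | hu
              · exact ⟨v1, Finset.mem_insert_of_mem (Finset.mem_insert_of_mem hv1W'),
                  hadj2.symm⟩
              · exact ⟨v2, Finset.mem_insert_of_mem (Finset.mem_insert_self _ _),
                  SimpleGraph.dist_eq_one_iff_adj.mp (Finset.mem_filter.mp hu).2⟩
              · obtain ⟨w, hwW', hadjw⟩ := hGCparent u hu
                exact ⟨w, Finset.mem_insert_of_mem (Finset.mem_insert_of_mem hwW'), hadjw⟩
            · have : u ∈ A' := Finset.mem_sdiff.mpr ⟨huA, huB⟩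
              rw [hA'eq, Finset.mem_singleton] at this
              subst this
              exact ⟨v2, Finset.mem_insert_of_mem (Finset.mem_insert_self _ _),
                (hpr ▸ hadj3).symm⟩
          · have hc1 : (insert r (insert v2 W')).card ≤ (insert v2 W').card + 1 :=
              Finset.card_insert_le _ _
            have hc2 : (insert v2 W').card ≤ W'.card + 1 := Finset.card_insert_le _ _
            omega
        · -- A'.card ≥ 2
          have hA'2 : 2 ≤ A'.card := by
            have : 1 ≤ A'.card := Finset.one_le_card.mpr ⟨r, hrA'⟩
            omega
          have hconn' : ∀ x ∈ A', ∀ z : V, T.dist r z + T.dist z x = T.dist r x → z ∈ A' := by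
            intro x hx z hbtw
            rw [Finset.mem_sdiff] at hx ⊢
            refine ⟨hconn x hx.1 z hbtw, fun hzB => hx.2 ?_⟩
            have hzeq := (Finset.mem_filter.mp hzB).2
            refine Finset.mem_filter.mpr ⟨hx.1, ?_⟩
            have t1 : T.dist v2 x ≤ T.dist v2 z + T.dist z x := hT.isConnected.dist_triangle
            have t2 : T.dist r x ≤ T.dist r v2 + T.dist v2 x := hT.isConnected.dist_triangle
            omega
          obtain ⟨S'', hS''sub, hrS'', hdom'', hcard''⟩ :=
            ih A' r (by omega) hrA' hA'2 hconn'
          refine ⟨insert v2 (W' ∪ S''), ?_, Finset.mem_insert_of_mem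
            (Finset.mem_union_right _ hrS''), ?_, ?_⟩
          · intro a ha
            rcases Finset.mem_insert.mp ha with rfl | ha'
            · exact hv2A
            · rcases Finset.mem_union.mp ha' with h | h
              · exact hBA (hWB (hW'W h))
              · exact (Finset.sdiff_subset) (hS''sub h)
          · intro u huA
            by_cases huB : u ∈ B
            · rcases htri u huB with rfl | hu | hu
              · exact ⟨v1, Finset.mem_insert_of_mem (Finset.mem_union_left _ hv1W'),
                  hadj2.symm⟩
              · exact ⟨v2, Finset.mem_insert_self _ _,
                  SimpleGraph.dist_eq_one_iff_adj.mp (Finset.mem_filter.mp hu).2⟩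
              · obtain ⟨w, hwW', hadjw⟩ := hGCparent u hu
                exact ⟨w, Finset.mem_insert_of_mem (Finset.mem_union_left _ hwW'), hadjw⟩
            · obtain ⟨v, hvS'', hadjv⟩ := hdom'' u (Finset.mem_sdiff.mpr ⟨huA, huB⟩)
              exact ⟨v, Finset.mem_insert_of_mem (Finset.mem_union_right _ hvS''), hadjv⟩
          · have hc1 : (insert v2 (W' ∪ S'')).card ≤ (W' ∪ S'').card + 1 :=
              Finset.card_insert_le _ _
            have hc2 : (W' ∪ S'').card ≤ W'.card + S''.card := Finset.card_union_le _ _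
            omega

end TreeAuxNS

theorem totalDomNum_le_superDomNum' {V : Type} [Fintype V] (T : SimpleGraph V)
    (hT : T.IsTree) (hcard : 3 ≤ Fintype.card V) :
    3 * sInf {n | ∃ S : Set V, (∀ u : V, ∃ v ∈ S, T.Adj v u) ∧ S.ncard = n} ≤
      4 * sInf {n | ∃ S : Set V, (∀ u ∈ Sᶜ, ∃ v ∈ S, T.neighborSet v ∩ Sᶜ = {u}) ∧ S.ncard = n} := by
  classical
  have hne : Nonempty V := Fintype.card_pos_iff.mp (by omega)
  obtain ⟨r⟩ := hne
  obtain ⟨v0, hv0A, hv0max⟩ := Finset.univ.exists_max_image (fun x => T.dist r x)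
    ⟨r, Finset.mem_univ r⟩
  have hTDS : ∃ S : Finset V, (∀ u : V, ∃ v ∈ S, T.Adj v u) ∧
      3 * S.card ≤ 2 * Fintype.card V := by
    by_cases hD1 : T.dist r v0 ≤ 1
    · have hnt : Nontrivial V := Fintype.one_lt_card_iff_nontrivial.mp (by omega)
      obtain ⟨x, hxr⟩ := exists_ne r
      have hpos : 0 < T.dist r x := hT.isConnected.pos_dist_of_ne (Ne.symm hxr)
      have hdx : T.dist r x = 1 := by have := hv0max x (Finset.mem_univ x); omega
      have hadj : T.Adj r x := SimpleGraph.dist_eq_one_iff_adj.mp hdx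
      refine ⟨{r, x}, ?_, ?_⟩
      · intro u
        by_cases hur : u = r
        · exact ⟨x, Finset.mem_insert_of_mem (Finset.mem_singleton_self x), hur ▸ hadj.symm⟩
        · have hpu : 0 < T.dist r u := hT.isConnected.pos_dist_of_ne (Ne.symm hur)
          have hdu : T.dist r u = 1 := by have := hv0max u (Finset.mem_univ u); omega
          exact ⟨r, Finset.mem_insert_self _ _, SimpleGraph.dist_eq_one_iff_adj.mp hdu⟩
      · have hc2 : ({r, x} : Finset V).card ≤ 2 :=
          (Finset.card_insert_le _ _).trans (by simp)
        omega
    · push_neg at hD1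
      have hv0r : v0 ≠ r := by
        intro h; rw [h, SimpleGraph.dist_self] at hD1; omega
      obtain ⟨v1, hadj1, hd1⟩ := TreeAuxNS.exists_parent hT hv0r
      set A := Finset.univ.erase v0 with hAdef
      have hv1A : v1 ∈ A := Finset.mem_erase.mpr ⟨hadj1.ne, Finset.mem_univ v1⟩
      have hAcard : A.card + 1 = Fintype.card V := by
        rw [hAdef, Finset.card_erase_of_mem (Finset.mem_univ v0), Finset.card_univ]
        omega
      have hconnA : ∀ x ∈ A, ∀ z : V, T.dist v1 z + T.dist z x = T.dist v1 x → z ∈ A := by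
        intro x hx z hbtw
        refine Finset.mem_erase.mpr ⟨?_, Finset.mem_univ z⟩
        rintro rfl
        have hxv0 : x ≠ z := (Finset.mem_erase.mp hx).1
        have e1 : T.dist v1 z = 1 := SimpleGraph.dist_eq_one_iff_adj.mpr hadj1
        obtain ⟨u, huadj, hdu⟩ := TreeAuxNS.exists_parent hT (r := x) hxv0.symm
        have hc1 : T.dist v1 x = T.dist x v1 := SimpleGraph.dist_comm
        have hc2 : T.dist z x = T.dist x z := SimpleGraph.dist_comm
        have hc3 : T.dist x u = T.dist u x := SimpleGraph.dist_comm
        have hune : u ≠ v1 := by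
          intro h
          rw [h] at hdu
          have hc4 : T.dist x v1 = T.dist v1 x := SimpleGraph.dist_comm
          omega
        rcases TreeAuxNS.adj_dist_succ hT r huadj with h | h
        · exact hune (TreeAuxNS.parent_unique hT huadj hadj1 (by omega) hd1)
        · have := hv0max u (Finset.mem_univ u)
          omega
      obtain ⟨S, hSsub, hv1S, hSdom, hScard⟩ :=
        TreeAuxNS.aux hT A.card A v1 le_rfl hv1A (by omega) hconnA
      refine ⟨S, ?_, by omega⟩
      intro u
      by_cases hu : u = v0
      · exact ⟨v1, hv1S, hu ▸ hadj1⟩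
      · exact hSdom u (Finset.mem_erase.mpr ⟨hu, Finset.mem_univ u⟩)
  obtain ⟨S, hS, hScard⟩ := hTDS
  have h1 : sInf {n | ∃ S : Set V, (∀ u : V, ∃ v ∈ S, T.Adj v u) ∧ S.ncard = n} ≤ S.card :=
    Nat.sInf_le ⟨(S : Set V), fun u => by
      obtain ⟨v, hv, ha⟩ := hS u
      exact ⟨v, Finset.mem_coe.mpr hv, ha⟩, Set.ncard_coe_finset S⟩
  have hspnon : {n | ∃ S : Set V,
      (∀ u ∈ Sᶜ, ∃ v ∈ S, T.neighborSet v ∩ Sᶜ = {u}) ∧ S.ncard = n}.Nonempty :=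
    ⟨(Set.univ : Set V).ncard, Set.univ, fun u hu => absurd (Set.mem_univ u) (by simpa using hu),
      rfl⟩
  obtain ⟨Ssp, hSsp, hcardEq⟩ := Nat.sInf_mem hspnon
  have hinj : (Sspᶜ : Set V).ncard ≤ Ssp.ncard := by
    set f : V → V := fun u => if h : u ∈ Sspᶜ then (hSsp u h).choose else u with hfdef
    refine Set.ncard_le_ncard_of_injOn f ?_ ?_ (Set.toFinite _)
    · intro u hu
      simp only [hfdef, dif_pos hu]
      exact (hSsp u hu).choose_spec.1
    · intro a ha b hb hab
      simp only [hfdef, dif_pos ha, dif_pos hb] at hab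
      have h1 := (hSsp a ha).choose_spec.2
      have h2 := (hSsp b hb).choose_spec.2
      rw [hab] at h1
      rw [h1] at h2
      exact (Set.singleton_eq_singleton_iff.mp h2)
  have hcompl : Ssp.ncard + (Sspᶜ : Set V).ncard = Nat.card V :=
    Set.ncard_add_ncard_compl Ssp
  have hnatcard : Nat.card V = Fintype.card V := Nat.card_eq_fintype_card
  omega


/-- For every tree of order at least 3, `γ_t(T)/γ_sp(T) ≤ 4/3`. -/
theorem totalDomNum_le_superDomNum {V : Type} [Fintype V] (T : SimpleGraph V)
    (hT : T.IsTree) (hcard : 3 ≤ Fintype.card V) :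
    3 * totalDomNum T ≤ 4 * superDomNum T := by
  have h := totalDomNum_le_superDomNum' T hT hcard
  simp only [totalDomNum, superDomNum, TotalDomSet, SuperDomSet]
  exact h
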